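/- For any lists p and y* over a type α with decidable equality, the empty completion of p is optimal if and only if D(p, y*) = m(p, y*); i.e., D(p, y*) = sInf { D(p ++ s, y*) : s ∈ List α } if and only if D(p, y*) = min over 0 ≤ j ≤ |y*| of D(p, y*_{<j}). -/

import Mathlib

/-- The cost structure of Mathlib's former `Levenshtein.Cost` (removed from Mathlib). -/
structure Levenshtein.Cost (α β δ : Type*) where
  delete : α → δ
  insert : β → δ
  substitute : α → β → δ

/-- Mathlib's former `Levenshtein.defaultCost`: unit costs, free matching substitution. -/
def Levenshtein.defaultCost {α : Type*} [DecidableEq α] : Levenshtein.Cost α α ℕ where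
  delete _ := 1
  insert _ := 1
  substitute a b := if a = b then 0 else 1

/-- Mathlib's former `levenshtein`, via its characterizing recurrence
(`levenshtein_nil_nil`, `levenshtein_nil_cons`, `levenshtein_cons_nil`, `levenshtein_cons_cons`). -/
def levenshtein {α β δ : Type*} [AddZeroClass δ] [Min δ] (C : Levenshtein.Cost α β δ) :
    List α → List β → δ
  | [], [] => 0
  | [], y :: ys => C.insert y + levenshtein C [] ys
  | x :: xs, [] => C.delete x + levenshtein C xs []
  | x :: xs, y :: ys =>
    min (C.delete x + levenshtein C xs (y :: ys))
      (min (C.insert y + levenshtein C (x :: xs) ys) (C.substitute x y + levenshtein C xs ys))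

/-- Unit-cost Levenshtein edit distance between two lists. -/
def editDist {α : Type*} [DecidableEq α] (u v : List α) : ℕ :=
  levenshtein Levenshtein.defaultCost u v

/-- `rowMin p y = min over 0 ≤ j ≤ |y|` of the edit distance between `p` and `y.take j`. -/
def rowMin {α : Type*} [DecidableEq α] (p y : List α) : ℕ :=
  (Finset.range (y.length + 1)).inf' (by simp) (fun j => editDist p (y.take j))

@[simp] lemma levenshtein_nil_nil {α β δ : Type*} [AddZeroClass δ] [Min δ]
    (C : Levenshtein.Cost α β δ) : levenshtein C [] [] = 0 := by
  simp only [levenshtein]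

@[simp] lemma levenshtein_nil_cons {α β δ : Type*} [AddZeroClass δ] [Min δ]
    (C : Levenshtein.Cost α β δ) (y : β) (ys : List β) :
    levenshtein C [] (y :: ys) = C.insert y + levenshtein C [] ys := by
  simp only [levenshtein]

@[simp] lemma levenshtein_cons_nil {α β δ : Type*} [AddZeroClass δ] [Min δ]
    (C : Levenshtein.Cost α β δ) (x : α) (xs : List α) :
    levenshtein C (x :: xs) [] = C.delete x + levenshtein C xs [] := by
  simp only [levenshtein]

@[simp] lemma levenshtein_cons_cons {α β δ : Type*} [AddZeroClass δ] [Min δ]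
    (C : Levenshtein.Cost α β δ) (x : α) (xs : List α) (y : β) (ys : List β) :
    levenshtein C (x :: xs) (y :: ys) =
      min (C.delete x + levenshtein C xs (y :: ys))
        (min (C.insert y + levenshtein C (x :: xs) ys) (C.substitute x y + levenshtein C xs ys)) := by
  simp only [levenshtein]

@[simp] lemma Levenshtein.defaultCost_delete {α : Type*} [DecidableEq α] (a : α) :
    (Levenshtein.defaultCost : Levenshtein.Cost α α ℕ).delete a = 1 := rfl

@[simp] lemma Levenshtein.defaultCost_insert {α : Type*} [DecidableEq α] (a : α) :
    (Levenshtein.defaultCost : Levenshtein.Cost α α ℕ).insert a = 1 := rfl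

@[simp] lemma Levenshtein.defaultCost_substitute {α : Type*} [DecidableEq α] (a b : α) :
    (Levenshtein.defaultCost : Levenshtein.Cost α α ℕ).substitute a b = if a = b then 0 else 1 := rfl

namespace EditDistAux

variable {α : Type*} [DecidableEq α]

lemma del_bound (x : α) (u v : List α) :
    editDist (x :: u) v ≤ 1 + editDist u v := by
  cases v with
  | nil => simp [editDist]
  | cons b v' =>
    simp only [editDist, levenshtein_cons_cons, Levenshtein.defaultCost_delete]
    exact min_le_left _ _

lemma ins_bound (b : α) (u v : List α) :
    editDist u (b :: v) ≤ 1 + editDist u v := by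
  cases u with
  | nil => simp [editDist]
  | cons x u' =>
    simp only [editDist, levenshtein_cons_cons, Levenshtein.defaultCost_insert]
    exact le_trans (le_trans (min_le_right _ _) (min_le_left _ _)) le_rfl

lemma sub_bound (x b : α) (u v : List α) :
    editDist (x :: u) (b :: v) ≤ (if x = b then 0 else 1) + editDist u v := by
  simp only [editDist, levenshtein_cons_cons, Levenshtein.defaultCost_substitute]
  exact le_trans (min_le_right _ _) (min_le_right _ _)

lemma self_le (w : List α) : editDist w w = 0 := by
  induction w with
  | nil => simp [editDist]
  | cons a w ih =>
    have := sub_bound a a w w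
    simp [ih] at this
    omega

lemma append_same_le (u v w : List α) :
    editDist (u ++ w) (v ++ w) ≤ editDist u v := by
  generalize hn : u.length + v.length = n
  induction n using Nat.strong_induction_on generalizing u v with
  | _ n ih =>
  subst hn
  cases u with
  | nil =>
    cases v with
    | nil => simp [self_le]
    | cons b v' =>
      calc editDist w (b :: (v' ++ w)) ≤ 1 + editDist w (v' ++ w) := ins_bound _ _ _
        _ ≤ 1 + editDist ([] : List α) v' := by
            have := ih (([] : List α).length + v'.length) (by simp) [] v' rfl
            simpa using Nat.add_le_add_left this 1
        _ = editDist ([] : List α) (b :: v') := by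
            simp [editDist]
  | cons x u' =>
    cases v with
    | nil =>
      calc editDist (x :: (u' ++ w)) w ≤ 1 + editDist (u' ++ w) w := del_bound _ _ _
        _ ≤ 1 + editDist u' ([] : List α) := by
            have := ih (u'.length + ([] : List α).length) (by simp) u' [] rfl
            simpa using Nat.add_le_add_left this 1
        _ = editDist (x :: u') ([] : List α) := by
            simp [editDist]
    | cons b v' =>
      have hd : editDist (x :: (u' ++ w)) ((b :: v') ++ w) ≤
          1 + editDist u' (b :: v') := by
        refine le_trans (del_bound _ _ _) ?_
        exact Nat.add_le_add_left (ih (u'.length + (b :: v').length) (by simp only [List.length_cons, List.length_nil]; omega) u' (b :: v') rfl) 1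
      have hi : editDist ((x :: u') ++ w) (b :: (v' ++ w)) ≤
          1 + editDist (x :: u') v' := by
        refine le_trans (ins_bound _ _ _) ?_
        exact Nat.add_le_add_left (ih ((x :: u').length + v'.length) (by simp only [List.length_cons, List.length_nil]; omega) (x :: u') v' rfl) 1
      have hs : editDist (x :: (u' ++ w)) (b :: (v' ++ w)) ≤
          (if x = b then 0 else 1) + editDist u' v' := by
        refine le_trans (sub_bound _ _ _ _) ?_
        exact Nat.add_le_add_left (ih (u'.length + v'.length) (by simp only [List.length_cons, List.length_nil]; omega) u' v' rfl) _
      have : editDist (x :: u') (b :: v') =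
          min (1 + editDist u' (b :: v'))
            (min (1 + editDist (x :: u') v')
              ((if x = b then 0 else 1) + editDist u' v')) := by
        simp [editDist, levenshtein_cons_cons]
      rw [this]
      rcases le_total (1 + editDist u' (b :: v'))
          (min (1 + editDist (x :: u') v') ((if x = b then 0 else 1) + editDist u' v')) with h | h
      · rw [min_eq_left h]; simpa using hd
      · rw [min_eq_right h]
        rcases le_total (1 + editDist (x :: u') v')
            ((if x = b then 0 else 1) + editDist u' v') with h2 | h2
        · rw [min_eq_left h2]; simpa using hi
        · rw [min_eq_right h2]; simpa using hs

lemma nil_right (u : List α) : editDist u [] = u.length := by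
  induction u with
  | nil => simp [editDist]
  | cons x u ih => simp [editDist, levenshtein_cons_nil] at ih ⊢; omega

/-- Key lower bound: some prefix of `y` is at least as close to `p`
as `y` is to any completion `p ++ s`. -/
lemma exists_prefix_le (p s y : List α) :
    ∃ y₁, y₁ <+: y ∧ editDist p y₁ ≤ editDist (p ++ s) y := by
  generalize hn : p.length + y.length = n
  induction n using Nat.strong_induction_on generalizing p y with
  | _ n ih =>
  subst hn
  cases p with
  | nil =>
    exact ⟨[], List.nil_prefix, by simp [editDist]⟩
  | cons x p' =>
    cases y with
    | nil =>
      refine ⟨[], List.nil_prefix, ?_⟩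
      rw [nil_right, nil_right]
      simp
    | cons b y' =>
      have hmin : editDist ((x :: p') ++ s) (b :: y') =
          min (1 + editDist (p' ++ s) (b :: y'))
            (min (1 + editDist ((x :: p') ++ s) y')
              ((if x = b then 0 else 1) + editDist (p' ++ s) y')) := by
        simp [editDist, levenshtein_cons_cons]
      obtain ⟨y₁, hpre, hle⟩ := ih (p'.length + (b :: y').length) (by simp only [List.length_cons, List.length_nil]; omega) p' (b :: y') rfl
      obtain ⟨y₂, hpre2, hle2⟩ := ih ((x :: p').length + y'.length) (by simp only [List.length_cons, List.length_nil]; omega) (x :: p') y' rfl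
      obtain ⟨y₃, hpre3, hle3⟩ := ih (p'.length + y'.length) (by simp only [List.length_cons, List.length_nil]; omega) p' y' rfl
      rw [hmin]
      rcases le_total (1 + editDist (p' ++ s) (b :: y'))
          (min (1 + editDist ((x :: p') ++ s) y')
            ((if x = b then 0 else 1) + editDist (p' ++ s) y')) with h | h
      · rw [min_eq_left h]
        exact ⟨y₁, hpre, le_trans (del_bound x p' y₁) (Nat.add_le_add_left hle 1)⟩
      · rw [min_eq_right h]
        rcases le_total (1 + editDist ((x :: p') ++ s) y')
            ((if x = b then 0 else 1) + editDist (p' ++ s) y') with h2 | h2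
        · rw [min_eq_left h2]
          exact ⟨b :: y₂, List.cons_prefix_cons.mpr ⟨rfl, hpre2⟩,
            le_trans (ins_bound b (x :: p') y₂) (Nat.add_le_add_left hle2 1)⟩
        · rw [min_eq_right h2]
          exact ⟨b :: y₃, List.cons_prefix_cons.mpr ⟨rfl, hpre3⟩,
            le_trans (sub_bound x b p' y₃) (Nat.add_le_add_left hle3 _)⟩

lemma sInf_eq_rowMin (p y : List α) :
    sInf {d | ∃ s : List α, d = editDist (p ++ s) y} = rowMin p y := by
  apply le_antisymm
  · -- sInf ≤ rowMin : rowMin is achieved at some j; the completion y.drop j works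
    obtain ⟨j, hj, hjeq⟩ := Finset.exists_mem_eq_inf' (s := Finset.range (y.length + 1))
      (by simp) (fun j => editDist p (y.take j))
    have h1 := append_same_le p (y.take j) (y.drop j)
    rw [List.take_append_drop] at h1
    refine le_trans (Nat.sInf_le ⟨y.drop j, rfl⟩) ?_
    rw [rowMin, hjeq]
    exact h1
  · -- rowMin ≤ sInf
    refine le_csInf ⟨editDist p y, [], by simp⟩ ?_
    rintro d ⟨s, rfl⟩
    obtain ⟨y₁, hpre, hle⟩ := exists_prefix_le p s y
    refine le_trans ?_ hle
    have : y₁ = y.take y₁.length := by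
      obtain ⟨t, rfl⟩ := hpre
      simp
    rw [rowMin]
    refine Finset.inf'_le _ (b := y₁.length) ?_ |>.trans ?_
    · simp [Nat.lt_succ_iff]
      exact hpre.length_le
    · rw [← this]

end EditDistAux

theorem empty_completion_optimal_iff {α : Type*} [DecidableEq α]
    (p ystar : List α) :
    editDist p ystar = sInf {d | ∃ s : List α, d = editDist (p ++ s) ystar} ↔
      editDist p ystar = rowMin p ystar := by
  rw [EditDistAux.sInf_eq_rowMin]
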